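/- arXiv:2301.01801 — 8 statements merged into one kernel-verified Lean document; each statement's English description precedes it below -/
import Mathlib

section
/- Suppose that for all α∈𝓐 and all x with δ/2 < x_r < 2b for every r, each U_r(·;α_r) is concave and each B_l is μ-strongly convex. Then for every α∈𝓐 the function x ↦ Φ(x;α) is μ_Φ-strongly concave on 𝓧 = {x∈ℝⁿ : δ/2 < x_r < 2b ∀r}, where μ_Φ = (ε + μ·M_min)/2 and M_min = min_{r=1,…,n} (number of links that lie on user r's route 𝓛_r and on no other user's route). -/
open Finset

/-- **Proposition 2.** If each surrogate utility `U_r(·;α_r)` is concave and each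
link cost `B_l` is `μ`-strongly convex (on the relevant region), then for every `α ∈ 𝓐` the
lower-level objective `Φ(·;α)` is `μ_Φ`-strongly concave on
`𝓧 = {x : δ/2 < x_r < 2b ∀r}`, where `μ_Φ = (ε + μ·M_min)/2` and `M_min` is the minimum over
users `r` of the number of links on route `𝓛_r` belonging to no other user's route. -/
theorem stmt1 (n m : ℕ) (route : Fin n → Finset (Fin m))
    (U : Fin n → ℝ → ℝ → ℝ) (B : Fin m → ℝ → ℝ)
    (ε μ δ b : ℝ) (hε : 0 < ε) (hμ : 0 < μ) (hδ : 0 < δ) (hδb : δ < b)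
    (A : Set (EuclideanSpace ℝ (Fin n)))
    (hUconc : ∀ α ∈ A, ∀ r, ConcaveOn ℝ (Set.Ioo (δ / 2) (2 * b)) (fun x => U r x (α r)))
    (hBsc : ∀ l, StrongConvexOn Set.univ μ (B l))
    (Mmin : ℝ)
    (hMmin : Mmin = ⨅ r : Fin n,
      (((route r).filter (fun l => ∀ r', r' ≠ r → l ∉ route r')).card : ℝ))
    (α : EuclideanSpace ℝ (Fin n)) (hα : α ∈ A) :
    StrongConcaveOn {x : EuclideanSpace ℝ (Fin n) | ∀ r, x r ∈ Set.Ioo (δ / 2) (2 * b)}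
      ((ε + μ * Mmin) / 2)
      (fun x : EuclideanSpace ℝ (Fin n) =>
        (∑ r, (U r (x r) (α r) - ε * (x r) ^ 2 / 2)) -
          ∑ l, B l (∑ r ∈ univ.filter (fun r => l ∈ route r), x r)) := by
  have hM0 : 0 ≤ Mmin := by
    rw [hMmin]
    exact Real.iInf_nonneg fun r => Nat.cast_nonneg _
  have hMle : ∀ r : Fin n, Mmin ≤
      (((route r).filter (fun l => ∀ r', r' ≠ r → l ∉ route r')).card : ℝ) := by
    intro r
    rw [hMmin]
    exact ciInf_le ⟨0, by rintro _ ⟨r', rfl⟩; exact Nat.cast_nonneg _⟩ r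
  constructor
  · -- convexity of the set
    intro x hx y hy p q hp hq hpq
    intro r
    have hmem := (convex_Ioo (δ / 2) (2 * b)) (hx r) (hy r) hp hq hpq
    have : (p • x + q • y) r = p • x r + q • y r := by
      simp [PiLp.add_apply, PiLp.smul_apply, smul_eq_mul]
    rw [this]
    exact hmem
  · intro x hx y hy p q hp hq hpq
    simp only [smul_eq_mul]
    have hz : ∀ r, (p • x + q • y) r = p * x r + q * y r := by
      intro r; simp [PiLp.add_apply, PiLp.smul_apply, smul_eq_mul]
    set d : Fin n → ℝ := fun r => x r - y r with hd
    have hD : ‖x - y‖ ^ 2 = ∑ r, d r ^ 2 := by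
      rw [EuclideanSpace.norm_eq, Real.sq_sqrt (by positivity)]
      refine Finset.sum_congr rfl fun r _ => ?_
      simp [hd, sq_abs, PiLp.sub_apply]
    have hD0 : 0 ≤ ∑ r, d r ^ 2 := Finset.sum_nonneg fun r _ => sq_nonneg _
    -- U part
    have hU : ∀ r : Fin n,
        p * U r (x r) (α r) + q * U r (y r) (α r) ≤ U r (p * x r + q * y r) (α r) := by
      intro r
      have := (hUconc α hα r).2 (hx r) (hy r) hp hq hpq
      simpa [smul_eq_mul] using this
    have hUsum : p * (∑ r, U r (x r) (α r)) + q * (∑ r, U r (y r) (α r)) ≤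
        ∑ r, U r (p * x r + q * y r) (α r) := by
      rw [Finset.mul_sum, Finset.mul_sum, ← Finset.sum_add_distrib]
      exact Finset.sum_le_sum fun r _ => hU r
    -- quadratic part (equality)
    have hq' : q = 1 - p := by linarith
    have hQ : ∑ r, ε * (p * x r + q * y r) ^ 2 / 2 =
        p * (∑ r, ε * (x r) ^ 2 / 2) + q * (∑ r, ε * (y r) ^ 2 / 2)
          - ε / 2 * (p * q) * ∑ r, d r ^ 2 := by
      rw [Finset.mul_sum, Finset.mul_sum, Finset.mul_sum, ← Finset.sum_add_distrib,
        ← Finset.sum_sub_distrib]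
      refine Finset.sum_congr rfl fun r _ => ?_
      subst hq'
      simp only [hd]
      ring
    -- B part
    have hBsum : ∑ l, B l (∑ r ∈ univ.filter (fun r => l ∈ route r), (p * x r + q * y r)) ≤
        p * (∑ l, B l (∑ r ∈ univ.filter (fun r => l ∈ route r), x r)) +
        q * (∑ l, B l (∑ r ∈ univ.filter (fun r => l ∈ route r), y r)) -
        p * q * (μ / 2) * ∑ l, (∑ r ∈ univ.filter (fun r => l ∈ route r), d r) ^ 2 := by
      rw [Finset.mul_sum, Finset.mul_sum, Finset.mul_sum, ← Finset.sum_add_distrib,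
        ← Finset.sum_sub_distrib]
      refine Finset.sum_le_sum fun l _ => ?_
      have hkey := (hBsc l).2 (Set.mem_univ (∑ r ∈ univ.filter (fun r => l ∈ route r), x r))
        (Set.mem_univ (∑ r ∈ univ.filter (fun r => l ∈ route r), y r)) hp hq hpq
      have h1 : (p • ∑ r ∈ univ.filter (fun r => l ∈ route r), x r +
          q • ∑ r ∈ univ.filter (fun r => l ∈ route r), y r) =
          ∑ r ∈ univ.filter (fun r => l ∈ route r), (p * x r + q * y r) := by
        simp only [smul_eq_mul, Finset.mul_sum, Finset.sum_add_distrib]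
      have h2 : ‖(∑ r ∈ univ.filter (fun r => l ∈ route r), x r) -
          ∑ r ∈ univ.filter (fun r => l ∈ route r), y r‖ ^ 2 =
          (∑ r ∈ univ.filter (fun r => l ∈ route r), d r) ^ 2 := by
        rw [← Finset.sum_sub_distrib]
        simp [hd, Real.norm_eq_abs, sq_abs]
      rw [h1] at hkey
      simp only [smul_eq_mul] at hkey
      rw [h2] at hkey
      nlinarith [hkey]
    -- combinatorial bound
    set E : Fin n → Finset (Fin m) :=
      fun r => (route r).filter (fun l => ∀ r', r' ≠ r → l ∉ route r') with hE
    have hfil : ∀ r : Fin n, ∀ l ∈ E r,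
        univ.filter (fun r' => l ∈ route r') = {r} := by
      intro r l hl
      rw [hE, Finset.mem_filter] at hl
      ext r'
      simp only [Finset.mem_filter, Finset.mem_univ, true_and, Finset.mem_singleton]
      constructor
      · intro h
        by_contra hne
        exact hl.2 r' hne h
      · rintro rfl; exact hl.1
    have hdisj : ((univ : Finset (Fin n)) : Set (Fin n)).PairwiseDisjoint E := by
      intro r _ s _ hrs
      simp only [Finset.disjoint_left]
      intro l hlr hls
      rw [hE, Finset.mem_filter] at hlr hls
      exact hls.2 r hrs hlr.1
    have hW : Mmin * ∑ r, d r ^ 2 ≤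
        ∑ l, (∑ r ∈ univ.filter (fun r => l ∈ route r), d r) ^ 2 := by
      calc Mmin * ∑ r, d r ^ 2 = ∑ r, Mmin * d r ^ 2 := by rw [Finset.mul_sum]
        _ ≤ ∑ r, ((E r).card : ℝ) * d r ^ 2 :=
            Finset.sum_le_sum fun r _ => mul_le_mul_of_nonneg_right (hMle r) (sq_nonneg _)
        _ = ∑ r, ∑ l ∈ E r, (∑ r' ∈ univ.filter (fun r' => l ∈ route r'), d r') ^ 2 := by
            refine Finset.sum_congr rfl fun r _ => ?_
            rw [Finset.sum_congr rfl fun l hl => by rw [hfil r l hl, Finset.sum_singleton]]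
            simp [Finset.sum_const, nsmul_eq_mul]
        _ = ∑ l ∈ univ.biUnion E, (∑ r' ∈ univ.filter (fun r' => l ∈ route r'), d r') ^ 2 :=
            (Finset.sum_biUnion hdisj).symm
        _ ≤ ∑ l, (∑ r' ∈ univ.filter (fun r' => l ∈ route r'), d r') ^ 2 :=
            Finset.sum_le_sum_of_subset_of_nonneg (Finset.subset_univ _)
              (fun _ _ _ => sq_nonneg _)
    -- combine everything
    simp only [hz, Finset.sum_sub_distrib]
    rw [hD]
    set SUx := ∑ r, U r (x r) (α r)
    set SUy := ∑ r, U r (y r) (α r)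
    set SUz := ∑ r, U r (p * x r + q * y r) (α r)
    set Qx := ∑ r, ε * (x r) ^ 2 / 2
    set Qy := ∑ r, ε * (y r) ^ 2 / 2
    set Bx := ∑ l, B l (∑ r ∈ univ.filter (fun r => l ∈ route r), x r)
    set By := ∑ l, B l (∑ r ∈ univ.filter (fun r => l ∈ route r), y r)
    set D := ∑ r, d r ^ 2
    set W := ∑ l, (∑ r ∈ univ.filter (fun r => l ∈ route r), d r) ^ 2
    have hpq0 : 0 ≤ p * q := mul_nonneg hp hq
    have h3 : p * q * (μ / 2) * (Mmin * D) ≤ p * q * (μ / 2) * W := by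
      apply mul_le_mul_of_nonneg_left hW
      positivity
    nlinarith [hUsum, hQ, hBsum, h3, mul_nonneg (mul_nonneg hpq0 hD0) hε.le,
      mul_nonneg (mul_nonneg (mul_nonneg hpq0 hD0) hμ.le) hM0]
end

section
/- Under Assumption 2, for every x ∈ 𝓧, all α, α′ ∈ 𝓐, and every vector u = (u_1,…,u_n) ∈ ℝⁿ, one has ‖∇²_x Φ(x;α)u − ∇²_x Φ(x;α′)u‖ ≤ L_u·(max_i |u_i|)·‖α − α′‖. -/
noncomputable section

open Finset

/-- `∇_x U`: partial derivative of a surrogate utility in the rate variable. -/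
def dU (U : ℝ → ℝ → ℝ) (x a : ℝ) : ℝ := deriv (fun t => U t a) x

/-- `∇²_x U`: second partial derivative in the rate variable. -/
def d2U (U : ℝ → ℝ → ℝ) (x a : ℝ) : ℝ := deriv (fun t => dU U t a) x

/-- `∇_α ∇_x U`: mixed second partial derivative. -/
def dadU (U : ℝ → ℝ → ℝ) (x a : ℝ) : ℝ := deriv (fun s => dU U x s) a

/-- The load of link `l`: `∑_{r : l ∈ 𝓛_r} x_r`. -/
def load {n m : ℕ} (route : Fin n → Finset (Fin m)) (x : Fin n → ℝ) (l : Fin m) : ℝ :=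
  ∑ r ∈ univ.filter (fun r => l ∈ route r), x r

/-- The Hessian `∇²_x Φ(x;α)` of the lower-level objective: its `(i,j)` entry is
`∇²_x U_i(x_i;α_i) − ε − ∑_{l∈𝓛_i} ∇²B_l(load_l)` for `i = j` and
`−∑_{l∈𝓛_i∩𝓛_j} ∇²B_l(load_l)` for `i ≠ j`. -/
def hessPhi {n m : ℕ} (U : Fin n → ℝ → ℝ → ℝ) (B : Fin m → ℝ → ℝ) (ε : ℝ)
    (route : Fin n → Finset (Fin m)) (x a : Fin n → ℝ) : Matrix (Fin n) (Fin n) ℝ :=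
  Matrix.of fun i j =>
    if i = j then
      d2U (U i) (x i) (a i) - ε - ∑ l ∈ route i, deriv (deriv (B l)) (load route x l)
    else
      -∑ l ∈ route i ∩ route j, deriv (deriv (B l)) (load route x l)

/-- The Euclidean norm on `Fin n → ℝ`. -/
def euclNorm {n : ℕ} (v : Fin n → ℝ) : ℝ := Real.sqrt (∑ i, (v i) ^ 2)


/-- **Proposition 3, Hessian Lipschitzness in `α`.** Under Assumption 2, for all
`x ∈ 𝓧`, `α, α' ∈ 𝓐` and every vector `u`,
`‖∇²_xΦ(x;α)u − ∇²_xΦ(x;α')u‖ ≤ L_u · max_i|u_i| · ‖α − α'‖`. -/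
theorem stmt4 (n m : ℕ) (hn : 0 < n) (route : Fin n → Finset (Fin m))
    (U : Fin n → ℝ → ℝ → ℝ) (B : Fin m → ℝ → ℝ)
    (ε μ δ b Lu Lb : ℝ) (hε : 0 < ε) (hμ : 0 < μ) (hδ : 0 < δ) (hδb : δ < b)
    (hLu : 0 ≤ Lu) (hLb : 0 ≤ Lb)
    (A : Set (Fin n → ℝ))
    -- Assumption 2
    (hUconc : ∀ a ∈ A, ∀ r, ConcaveOn ℝ (Set.Ioo (δ / 2) (2 * b)) (fun x => U r x (a r)))
    (hBsc : ∀ l, StrongConvexOn Set.univ μ (B l))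
    (hUx_lipx : ∀ r (a : ℝ), ∀ x ∈ Set.Ioo (δ / 2) (2 * b), ∀ y ∈ Set.Ioo (δ / 2) (2 * b),
      |dU (U r) x a - dU (U r) y a| ≤ Lu * |x - y|)
    (hUx_lipa : ∀ r, ∀ x ∈ Set.Ioo (δ / 2) (2 * b), ∀ a a' : ℝ,
      |dU (U r) x a - dU (U r) x a'| ≤ Lu * |a - a'|)
    (hUxx_lipx : ∀ r (a : ℝ), ∀ x ∈ Set.Ioo (δ / 2) (2 * b), ∀ y ∈ Set.Ioo (δ / 2) (2 * b),
      |d2U (U r) x a - d2U (U r) y a| ≤ Lu * |x - y|)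
    (hUxx_lipa : ∀ r, ∀ x ∈ Set.Ioo (δ / 2) (2 * b), ∀ a a' : ℝ,
      |d2U (U r) x a - d2U (U r) x a'| ≤ Lu * |a - a'|)
    (hUax_lipx : ∀ r (a : ℝ), ∀ x ∈ Set.Ioo (δ / 2) (2 * b), ∀ y ∈ Set.Ioo (δ / 2) (2 * b),
      |dadU (U r) x a - dadU (U r) y a| ≤ Lu * |x - y|)
    (hUax_lipa : ∀ r, ∀ x ∈ Set.Ioo (δ / 2) (2 * b), ∀ a a' : ℝ,
      |dadU (U r) x a - dadU (U r) x a'| ≤ Lu * |a - a'|)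
    (hBd_lip : ∀ l (x y : ℝ), |deriv (B l) x - deriv (B l) y| ≤ Lb * |x - y|)
    (hBdd_lip : ∀ l (x y : ℝ), |deriv (deriv (B l)) x - deriv (deriv (B l)) y| ≤ Lb * |x - y|)
    -- the points
    (x : Fin n → ℝ) (hx : ∀ r, x r ∈ Set.Ioo (δ / 2) (2 * b))
    (α α' : Fin n → ℝ) (hαA : α ∈ A) (hα'A : α' ∈ A)
    (u : Fin n → ℝ) :
    euclNorm ((hessPhi U B ε route x α).mulVec u - (hessPhi U B ε route x α').mulVec u) ≤
      Lu * (⨆ i : Fin n, |u i|) * euclNorm (α - α') := by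

  have hne : Nonempty (Fin n) := ⟨⟨0, hn⟩⟩
  set S : ℝ := ⨆ i : Fin n, |u i| with hS
  have hSb : BddAbove (Set.range fun i : Fin n => |u i|) :=
    (Set.finite_range _).bddAbove
  have hS0 : 0 ≤ S := le_trans (abs_nonneg (u ⟨0, hn⟩)) (le_ciSup hSb ⟨0, hn⟩)
  have hSge : ∀ i, |u i| ≤ S := fun i => le_ciSup hSb i
  -- the difference vector is diagonal
  have hcomp : ∀ i, ((hessPhi U B ε route x α).mulVec u -
      (hessPhi U B ε route x α').mulVec u) i
      = (d2U (U i) (x i) (α i) - d2U (U i) (x i) (α' i)) * u i := by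
    intro i
    simp only [Pi.sub_apply, Matrix.mulVec, dotProduct, hessPhi, Matrix.of_apply]
    rw [← Finset.sum_sub_distrib]
    rw [Finset.sum_eq_single i]
    · simp [sub_mul]
    · intro j _ hj
      simp [(Ne.symm hj : ¬ i = j)]
    · simp
  have hbound : ∀ i, |((hessPhi U B ε route x α).mulVec u -
      (hessPhi U B ε route x α').mulVec u) i| ≤ Lu * S * |α i - α' i| := by
    intro i
    rw [hcomp i, abs_mul]
    calc |d2U (U i) (x i) (α i) - d2U (U i) (x i) (α' i)| * |u i|
        ≤ (Lu * |α i - α' i|) * S := by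
          exact mul_le_mul (hUxx_lipa i (x i) (hx i) (α i) (α' i)) (hSge i)
            (abs_nonneg _) (by positivity)
      _ = Lu * S * |α i - α' i| := by ring
  unfold euclNorm
  have key : ∑ i, (((hessPhi U B ε route x α).mulVec u -
      (hessPhi U B ε route x α').mulVec u) i) ^ 2
      ≤ (Lu * S) ^ 2 * ∑ i, ((α - α') i) ^ 2 := by
    rw [Finset.mul_sum]
    apply Finset.sum_le_sum
    intro i _
    have := hbound i
    have h1 : (((hessPhi U B ε route x α).mulVec u -
        (hessPhi U B ε route x α').mulVec u) i) ^ 2 ≤ (Lu * S * |α i - α' i|) ^ 2 := by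
      rw [← sq_abs]
      exact pow_le_pow_left₀ (abs_nonneg _) this 2
    calc (((hessPhi U B ε route x α).mulVec u -
        (hessPhi U B ε route x α').mulVec u) i) ^ 2
        ≤ (Lu * S * |α i - α' i|) ^ 2 := h1
      _ = (Lu * S) ^ 2 * ((α - α') i) ^ 2 := by
          rw [mul_pow, sq_abs]; rfl
  calc Real.sqrt (∑ i, (((hessPhi U B ε route x α).mulVec u -
      (hessPhi U B ε route x α').mulVec u) i) ^ 2)
      ≤ Real.sqrt ((Lu * S) ^ 2 * ∑ i, ((α - α') i) ^ 2) := Real.sqrt_le_sqrt key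
    _ = (Lu * S) * Real.sqrt (∑ i, ((α - α') i) ^ 2) := by
        rw [Real.sqrt_mul (sq_nonneg _), Real.sqrt_sq (by positivity)]
    _ = Lu * S * Real.sqrt (∑ i, ((α - α') i) ^ 2) := rfl
end
end

section
/- Fix P > 0, n ≥ 2, true parameters α̃_1,…,α̃_n > 0 with α̃_r ≠ 1 for all r, a bound b > 0, and the set 𝓐 = {α ∈ ℝⁿ : 0 < α_r ≤ b, r=1,…,n} where additionally α_r ≠ 1 for all r. For α ∈ 𝓐 let x*(α) be a maximizer of Σ_{r=1}^n x_r^{1−α_r}/(1−α_r) over the single-link feasible set F = {x ∈ ℝⁿ : x_r > 0 ∀r, Σ_{r=1}^n x_r ≤ P}. Define Ψ(α) = Σ_{r=1}^n x*_r(α)^{1−α̃_r}/(1−α̃_r). If α* ∈ argmax_{α∈𝓐} Ψ(α), then x*(α*) maximizes the true objective Σ_{r=1}^n x_r^{1−α̃_r}/(1−α̃_r) over F. -/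
open Real Finset

lemma tangent_lt {p x y : ℝ} (hp : p < 1) (hp0 : p ≠ 0) (hx : 0 < x) (hy : 0 < y)
    (hxy : x ≠ y) : x ^ p / p < y ^ p / p + y ^ (p - 1) * (x - y) := by
  have hdiv : 0 < x / y := div_pos hx hy
  have ht : x / y ≠ 1 := by
    intro h
    rw [div_eq_one_iff_eq hy.ne'] at h
    exact hxy h
  have hs : (-1:ℝ) < x / y - 1 := by linarith
  have hs0 : x / y - 1 ≠ 0 := sub_ne_zero.mpr ht
  have hyp : (0:ℝ) < y ^ p := rpow_pos_of_pos hy p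
  have key : y ^ (p-1) * (x - y) = ((x/y) - 1) * y ^ p := by
    rw [Real.rpow_sub_one hy.ne']
    field_simp
  have hmul : (x/y)^p * y^p = x^p := by
    rw [← Real.mul_rpow hdiv.le hy.le, div_mul_cancel₀ _ hy.ne']
  rcases lt_or_gt_of_ne hp0 with hpneg | hppos
  · -- p < 0
    have hlog : Real.log (x/y) ≤ x/y - 1 := Real.log_le_sub_one_of_pos hdiv
    have hlogne : Real.log (x/y) ≠ 0 := by
      intro h
      rcases Real.log_eq_zero.mp h with h' | h' | h' <;> [linarith; exact ht h'; linarith]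
    have hexp : 1 + p * Real.log (x/y) < (x/y) ^ p := by
      rw [Real.rpow_def_of_pos hdiv]
      have hne : Real.log (x/y) * p ≠ 0 := mul_ne_zero hlogne hp0
      have := Real.add_one_lt_exp hne
      nlinarith [this]
    have h2 : 1 + p * (x/y - 1) < (x/y)^p := by nlinarith
    have h3 : y ^ p + p * (y ^ (p-1) * (x - y)) < x ^ p := by nlinarith [key, hyp, h2, hmul]
    rw [div_lt_iff_of_neg hpneg]
    have : (y ^ p / p + y ^ (p - 1) * (x - y)) * p = y ^ p + p * (y ^ (p-1) * (x-y)) := by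
      field_simp
    rw [this]; exact h3
  · -- 0 < p < 1
    have hb : (x/y)^p < 1 + p * (x/y - 1) := by
      have := rpow_one_add_lt_one_add_mul_self hs.le hs0 hppos hp
      have e : (1 + (x/y - 1)) = x/y := by ring
      rw [e] at this; linarith
    have h3 : x ^ p < y ^ p + p * (y ^ (p-1) * (x - y)) := by nlinarith [key, hyp, hmul]
    rw [div_lt_iff₀ hppos]
    have : (y ^ p / p + y ^ (p - 1) * (x - y)) * p = y ^ p + p * (y ^ (p-1) * (x-y)) := by
      field_simp
    rw [this]; exact h3

lemma tangent_le {p x y : ℝ} (hp : p < 1) (hp0 : p ≠ 0) (hx : 0 < x) (hy : 0 < y) :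
    x ^ p / p ≤ y ^ p / p + y ^ (p - 1) * (x - y) := by
  rcases eq_or_ne x y with rfl | h
  · simp
  · exact (tangent_lt hp hp0 hx hy h).le

lemma kkt_max {n : ℕ} {P : ℝ} (β : Fin n → ℝ) (hβ : ∀ r, 0 < β r) (hβ1 : ∀ r, β r ≠ 1)
    (y : Fin n → ℝ) (hy : ∀ r, 0 < y r) (hysum : ∑ r, y r = P)
    (μ : ℝ) (hμ : 0 < μ) (hkkt : ∀ r, (y r) ^ (-(β r)) = μ)
    (x : Fin n → ℝ) (hx : ∀ r, 0 < x r) (hxsum : ∑ r, x r ≤ P) :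
    ∑ r, (x r) ^ (1 - β r) / (1 - β r) ≤ ∑ r, (y r) ^ (1 - β r) / (1 - β r) ∧
      (x ≠ y → ∑ r, (x r) ^ (1 - β r) / (1 - β r) < ∑ r, (y r) ^ (1 - β r) / (1 - β r)) := by
  have hp : ∀ r, (1 - β r) < 1 := fun r => by linarith [hβ r]
  have hp0 : ∀ r, (1 - β r) ≠ 0 := fun r => by
    have := hβ1 r; intro h; apply this; linarith
  have hexp : ∀ r, (y r) ^ (1 - β r - 1) = μ := fun r => by
    rw [show (1 - β r - 1) = -(β r) by ring]; exact hkkt r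
  have hterm_le : ∀ r, (x r) ^ (1 - β r) / (1 - β r) ≤
      (y r) ^ (1 - β r) / (1 - β r) + μ * (x r - y r) := fun r => by
    have := tangent_le (hp r) (hp0 r) (hx r) (hy r)
    rwa [hexp r] at this
  have hsum_bound : ∑ r, ((y r) ^ (1 - β r) / (1 - β r) + μ * (x r - y r)) ≤
      ∑ r, (y r) ^ (1 - β r) / (1 - β r) := by
    rw [Finset.sum_add_distrib, ← Finset.mul_sum, Finset.sum_sub_distrib, hysum]
    have : μ * (∑ r, x r - P) ≤ 0 :=
      mul_nonpos_of_nonneg_of_nonpos hμ.le (by linarith)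
    linarith
  constructor
  · calc ∑ r, (x r) ^ (1 - β r) / (1 - β r)
        ≤ ∑ r, ((y r) ^ (1 - β r) / (1 - β r) + μ * (x r - y r)) :=
          Finset.sum_le_sum fun r _ => hterm_le r
      _ ≤ _ := hsum_bound
  · intro hne
    obtain ⟨r₁, hr₁⟩ : ∃ r, x r ≠ y r := by
      by_contra h
      push_neg at h
      exact hne (funext h)
    calc ∑ r, (x r) ^ (1 - β r) / (1 - β r)
        < ∑ r, ((y r) ^ (1 - β r) / (1 - β r) + μ * (x r - y r)) := by
          refine Finset.sum_lt_sum (fun r _ => hterm_le r) ⟨r₁, Finset.mem_univ _, ?_⟩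
          have := tangent_lt (hp r₁) (hp0 r₁) (hx r₁) (hy r₁) hr₁
          rwa [hexp r₁] at this
      _ ≤ _ := hsum_bound

/-- **Theorem 2, single-link validation.** If `α*` maximizes the bilevel upper
objective `Ψ(α) = ∑ r, x*_r(α)^{1-α̃_r}/(1-α̃_r)` over `𝓐`, where `x*(α)` maximizes the
surrogate α-fair objective over the single-link feasible set `F`, then the resources `x*(α*)`
maximize the true α-fair objective over `F`. -/
theorem stmt11 (n : ℕ) (hn : 2 ≤ n) (P b : ℝ) (hP : 0 < P) (hb : 0 < b)
    (αt : Fin n → ℝ) (hαt : ∀ r, 0 < αt r) (hαt1 : ∀ r, αt r ≠ 1)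
    (A : Set (Fin n → ℝ))
    (hA : A = {α : Fin n → ℝ | ∀ r, (0 < α r ∧ α r ≤ b) ∧ α r ≠ 1})
    (F : Set (Fin n → ℝ))
    (hF : F = {x : Fin n → ℝ | (∀ r, 0 < x r) ∧ ∑ r, x r ≤ P})
    (xstar : (Fin n → ℝ) → (Fin n → ℝ))
    (hxstar : ∀ α ∈ A, xstar α ∈ F ∧
      IsMaxOn (fun x : Fin n → ℝ => ∑ r, (x r) ^ (1 - α r) / (1 - α r)) F (xstar α))
    (Psi : (Fin n → ℝ) → ℝ)
    (hPsi : Psi = fun α => ∑ r, (xstar α r) ^ (1 - αt r) / (1 - αt r))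
    (αst : Fin n → ℝ) (hαstA : αst ∈ A) (hαst : IsMaxOn Psi A αst) :
    IsMaxOn (fun x : Fin n → ℝ => ∑ r, (x r) ^ (1 - αt r) / (1 - αt r)) F (xstar αst) := by
  subst hA hF hPsi
  have r₀ : Fin n := ⟨0, by omega⟩
  set M : ℝ := max 1 (P ^ αt r₀) with hM
  have hM0 : (0:ℝ) ≤ M := le_trans zero_le_one (le_max_left _ _)
  set h : ℝ → ℝ := fun s => ∑ r, s ^ (αt r)⁻¹ with hh
  have hcont : ContinuousOn h (Set.Icc 0 M) := by
    apply continuousOn_finset_sum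
    intro r _
    intro s _
    exact (Real.continuousAt_rpow_const s _ (Or.inr (inv_pos.mpr (hαt r)).le)).continuousWithinAt
  have hh0 : h 0 = 0 := by
    simp only [hh]
    rw [Finset.sum_eq_zero]
    intro r _
    exact Real.zero_rpow (inv_ne_zero (hαt r).ne')
  have hhM : P ≤ h M := by
    have h1 : P ≤ M ^ (αt r₀)⁻¹ := by
      calc P = (P ^ αt r₀) ^ (αt r₀)⁻¹ := by
              rw [← Real.rpow_mul hP.le, mul_inv_cancel₀ (hαt r₀).ne', Real.rpow_one]
        _ ≤ M ^ (αt r₀)⁻¹ :=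
              Real.rpow_le_rpow (Real.rpow_nonneg hP.le _) (le_max_right _ _)
                (inv_pos.mpr (hαt r₀)).le
    calc P ≤ M ^ (αt r₀)⁻¹ := h1
      _ ≤ h M := Finset.single_le_sum
          (f := fun r => M ^ (αt r)⁻¹) (fun r _ => Real.rpow_nonneg hM0 _)
          (Finset.mem_univ r₀)
  obtain ⟨s₀, hs₀mem, hs₀⟩ : ∃ s₀ ∈ Set.Icc (0:ℝ) M, h s₀ = P := by
    have := intermediate_value_Icc hM0 hcont
    have hmem : P ∈ Set.Icc (h 0) (h M) := ⟨by rw [hh0]; exact hP.le, hhM⟩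
    obtain ⟨s₀, hs₀⟩ := this hmem
    exact ⟨s₀, hs₀.1, hs₀.2⟩
  have hs₀pos : 0 < s₀ := by
    rcases lt_or_eq_of_le hs₀mem.1 with h' | h'
    · exact h'
    · exfalso; rw [← h', hh0] at hs₀; linarith
  set xb : Fin n → ℝ := fun r => s₀ ^ (αt r)⁻¹ with hxb
  have hxbpos : ∀ r, 0 < xb r := fun r => Real.rpow_pos_of_pos hs₀pos _
  have hxbsum : ∑ r, xb r = P := hs₀
  have hxbF : xb ∈ {x : Fin n → ℝ | (∀ r, 0 < x r) ∧ ∑ r, x r ≤ P} :=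
    ⟨hxbpos, le_of_eq hxbsum⟩
  have hkkt_gen : ∀ (c : ℝ) (r : Fin n), xb r ^ (-(c * αt r)) = s₀ ^ (-c) := by
    intro c r
    rw [hxb]
    rw [← Real.rpow_mul hs₀pos.le]
    congr 1
    field_simp [(hαt r).ne']
  -- choose t
  have hne : (Finset.univ : Finset (Fin n)).Nonempty := ⟨r₀, Finset.mem_univ _⟩
  set t₁ : ℝ := Finset.univ.inf' hne (fun r => b / αt r) with ht₁
  have ht₁pos : 0 < t₁ := by
    rw [ht₁, Finset.lt_inf'_iff]
    intro r _
    exact div_pos hb (hαt r)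
  obtain ⟨t, ⟨htpos, htle⟩, htS⟩ :
      ∃ t ∈ Set.Ioc 0 t₁, t ∉ Set.range (fun r => (αt r)⁻¹) := by
    have hinf : (Set.Ioc (0:ℝ) t₁).Infinite := Set.Ioc_infinite ht₁pos
    obtain ⟨t, ht⟩ := (hinf.diff (Set.finite_range (fun r : Fin n => (αt r)⁻¹))).nonempty
    exact ⟨t, ht.1, ht.2⟩
  set α' : Fin n → ℝ := fun r => t * αt r with hα'
  have hα'A : α' ∈ {α : Fin n → ℝ | ∀ r, (0 < α r ∧ α r ≤ b) ∧ α r ≠ 1} := by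
    intro r
    refine ⟨⟨mul_pos htpos (hαt r), ?_⟩, ?_⟩
    · have h1 : t₁ ≤ b / αt r := Finset.inf'_le _ (Finset.mem_univ r)
      have h2 : t ≤ b / αt r := le_trans htle h1
      rw [le_div_iff₀ (hαt r)] at h2
      exact h2
    · intro hcontra
      exact htS ⟨r, (eq_inv_of_mul_eq_one_left hcontra).symm⟩
  have hμ'pos : (0:ℝ) < s₀ ^ (-t) := Real.rpow_pos_of_pos hs₀pos _
  have hμpos : (0:ℝ) < s₀⁻¹ := inv_pos.mpr hs₀pos
  have hkkt_true : ∀ r, xb r ^ (-(αt r)) = s₀⁻¹ := by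
    intro r
    have := hkkt_gen 1 r
    rw [one_mul] at this
    rw [this, Real.rpow_neg_one]
  have hkkt_sur : ∀ r, xb r ^ (-(α' r)) = s₀ ^ (-t) := fun r => hkkt_gen t r
  -- surrogate optimality of xb and uniqueness ⇒ xstar α' = xb
  obtain ⟨hxsF, hxsmax⟩ := hxstar α' hα'A
  have hxs_eq : xstar α' = xb := by
    by_contra hne'
    have hkm := kkt_max α' (fun r => mul_pos htpos (hαt r)) (fun r => (hα'A r).2)
      xb hxbpos hxbsum _ hμ'pos hkkt_sur (xstar α') hxsF.1 hxsF.2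
    have h1 := hkm.2 hne'
    have h2 : ∑ r, (xb r) ^ (1 - α' r) / (1 - α' r) ≤
        ∑ r, (xstar α' r) ^ (1 - α' r) / (1 - α' r) := hxsmax hxbF
    linarith
  -- conclude
  intro x hxF
  simp only [Set.mem_setOf_eq] at hxF ⊢
  have h1 : ∑ r, (x r) ^ (1 - αt r) / (1 - αt r) ≤
      ∑ r, (xb r) ^ (1 - αt r) / (1 - αt r) :=
    (kkt_max αt hαt hαt1 xb hxbpos hxbsum _ hμpos hkkt_true x hxF.1 hxF.2).1
  have h2 : ∑ r, (xstar α' r) ^ (1 - αt r) / (1 - αt r) ≤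
      ∑ r, (xstar αst r) ^ (1 - αt r) / (1 - αt r) := hαst hα'A
  rw [hxs_eq] at h2
  linarith
end

section
/- Fix P > 0, n ≥ 1, and an index i. Let Ω ⊆ {α ∈ ℝⁿ : α_t > 0 ∀t} be open and let x_i : Ω → (0,∞) be differentiable and satisfy, for all α ∈ Ω, Σ_{t=1}^n x_i(α)^{α_i/α_t} = P. Then for every α ∈ Ω and every j ≠ i: ∂x_i/∂α_j (α) = (x_i(α)^{α_i/α_j} · (α_i/α_j²) · ln x_i(α)) / (Σ_{t=1}^n (α_i/α_t) · x_i(α)^{α_i/α_t − 1}). -/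
/-- Implicit differentiation of `∑ t, x_i(α)^{α_i/α_t} = P` with respect to
`α_j` for `j ≠ i`: the partial derivative `∂x_i/∂α_j` is given by the stated formula. -/
theorem stmt14 (n : ℕ) (P : ℝ) (hP : 0 < P) (i : Fin n)
    (Ω : Set (Fin n → ℝ)) (hΩopen : IsOpen Ω) (hΩpos : ∀ α ∈ Ω, ∀ t, 0 < α t)
    (xi : (Fin n → ℝ) → ℝ)
    (hdiff : ∀ α ∈ Ω, DifferentiableAt ℝ xi α)
    (hxi : ∀ α ∈ Ω, 0 < xi α)
    (heq : ∀ α ∈ Ω, ∑ t, (xi α) ^ (α i / α t) = P)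
    (α : Fin n → ℝ) (hα : α ∈ Ω) (j : Fin n) (hj : j ≠ i) :
    fderiv ℝ xi α (Pi.single j 1) =
      ((xi α) ^ (α i / α j) * (α i / (α j) ^ 2) * Real.log (xi α)) /
        (∑ t, (α i / α t) * (xi α) ^ (α i / α t - 1)) := by
  set D := fderiv ℝ xi α with hD
  have hxipos : 0 < xi α := hxi α hα
  have hαpos : ∀ t, 0 < α t := hΩpos α hα
  have hDD : HasFDerivAt xi D α := (hdiff α hα).hasFDerivAt
  -- derivative of β ↦ β i / β t
  have hG : ∀ t : Fin n, HasFDerivAt (fun β : Fin n → ℝ => β i / β t)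
      ((α i) • ((-((α t) ^ 2)⁻¹) • (ContinuousLinearMap.proj t : (Fin n → ℝ) →L[ℝ] ℝ))
        + ((α t)⁻¹) • (ContinuousLinearMap.proj i : (Fin n → ℝ) →L[ℝ] ℝ)) α := by
    intro t
    have hproj : ∀ s : Fin n, HasFDerivAt (fun β : Fin n → ℝ => β s)
        (ContinuousLinearMap.proj s : (Fin n → ℝ) →L[ℝ] ℝ) α := by
      intro s
      exact (ContinuousLinearMap.proj (R := ℝ) (φ := fun _ : Fin n => ℝ) s).hasFDerivAt (x := α)
    have hinv : HasFDerivAt (fun β : Fin n → ℝ => (β t)⁻¹)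
        ((-((α t) ^ 2)⁻¹) • (ContinuousLinearMap.proj t : (Fin n → ℝ) →L[ℝ] ℝ)) α :=
      (hasDerivAt_inv (hαpos t).ne').comp_hasFDerivAt α (hproj t)
    have := (hproj i).mul hinv
    exact this.congr_of_eventuallyEq (Filter.Eventually.of_forall fun β => by simp [div_eq_mul_inv])
  -- derivative of each summand
  have hterm : ∀ t : Fin n, HasFDerivAt (fun β : Fin n → ℝ => xi β ^ (β i / β t))
      (((α i / α t) * (xi α) ^ (α i / α t - 1)) • D
        + ((xi α) ^ (α i / α t) * Real.log (xi α)) •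
          ((α i) • ((-((α t) ^ 2)⁻¹) • (ContinuousLinearMap.proj t : (Fin n → ℝ) →L[ℝ] ℝ))
            + ((α t)⁻¹) • (ContinuousLinearMap.proj i : (Fin n → ℝ) →L[ℝ] ℝ))) α :=
    fun t => hDD.rpow (hG t) hxipos
  have hsum : HasFDerivAt (fun β : Fin n → ℝ => ∑ t, xi β ^ (β i / β t))
      (∑ t, (((α i / α t) * (xi α) ^ (α i / α t - 1)) • D
        + ((xi α) ^ (α i / α t) * Real.log (xi α)) •
          ((α i) • ((-((α t) ^ 2)⁻¹) • (ContinuousLinearMap.proj t : (Fin n → ℝ) →L[ℝ] ℝ))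
            + ((α t)⁻¹) • (ContinuousLinearMap.proj i : (Fin n → ℝ) →L[ℝ] ℝ)))) α :=
    HasFDerivAt.fun_sum (fun t _ => hterm t)
  -- the function is locally constant, hence derivative 0
  have hconst : HasFDerivAt (fun β : Fin n → ℝ => ∑ t, xi β ^ (β i / β t))
      (0 : (Fin n → ℝ) →L[ℝ] ℝ) α := by
    have hev : (fun β : Fin n → ℝ => ∑ t, xi β ^ (β i / β t)) =ᶠ[nhds α] fun _ => P :=
      Filter.eventuallyEq_of_mem (hΩopen.mem_nhds hα) (fun β hβ => heq β hβ)
    exact (hasFDerivAt_const P α).congr_of_eventuallyEq hev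
  have hzero := hsum.unique hconst
  have happ := congrArg (fun (L : (Fin n → ℝ) →L[ℝ] ℝ) => L (Pi.single j 1)) hzero
  simp only [ContinuousLinearMap.coe_sum', Finset.sum_apply, ContinuousLinearMap.add_apply,
    ContinuousLinearMap.coe_smul', Pi.smul_apply, ContinuousLinearMap.proj_apply,
    ContinuousLinearMap.zero_apply, smul_eq_mul] at happ
  have hsingle_i : (Pi.single j (1:ℝ) : Fin n → ℝ) i = 0 := by simp [Pi.single_apply, Ne.symm hj]
  have hsingle : ∀ t : Fin n, (Pi.single j (1:ℝ) : Fin n → ℝ) t = if t = j then 1 else 0 := by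
    intro t
    rcases eq_or_ne t j with h | h
    · subst h; simp
    · simp [h, Pi.single_eq_of_ne h]
  rw [Finset.sum_congr rfl (fun t _ => by rw [hsingle_i, hsingle t])] at happ
  -- split the sum
  have hsplit : ∑ t : Fin n,
      ((α i / α t * xi α ^ (α i / α t - 1)) * D (Pi.single j 1)
        + xi α ^ (α i / α t) * Real.log (xi α) *
          (α i * (-((α t) ^ 2)⁻¹ * (if t = j then (1:ℝ) else 0)) + (α t)⁻¹ * 0))
      = (∑ t : Fin n, (α i / α t) * xi α ^ (α i / α t - 1)) * D (Pi.single j 1)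
        - xi α ^ (α i / α j) * (α i / (α j) ^ 2) * Real.log (xi α) := by
    rw [Finset.sum_add_distrib, ← Finset.sum_mul]
    congr 1
    rw [Finset.sum_eq_single_of_mem j (Finset.mem_univ j)]
    · have hj2 : (α j) ^ 2 ≠ 0 := pow_ne_zero 2 (hαpos j).ne'
      field_simp
      ring_nf
      simp
    · intro b _ hb; simp [hb]
  rw [hsplit] at happ
  have hden : 0 < ∑ t : Fin n, (α i / α t) * xi α ^ (α i / α t - 1) := by
    apply Finset.sum_pos
    · intro t _
      exact mul_pos (div_pos (hαpos i) (hαpos t)) (Real.rpow_pos_of_pos hxipos _)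
    · exact ⟨i, Finset.mem_univ i⟩
  rw [eq_div_iff hden.ne']
  linarith [happ]
end

section
/- Fix P > 0, n ≥ 1, and an index i. Let Ω ⊆ {α ∈ ℝⁿ : α_t > 0 ∀t} be open and let x_i : Ω → (0,∞) be differentiable and satisfy, for all α ∈ Ω, Σ_{t=1}^n x_i(α)^{α_i/α_t} = P. Then for every α ∈ Ω: ∂x_i/∂α_i (α) = (−Σ_{t≠i} (1/α_t) · x_i(α)^{α_i/α_t} · ln x_i(α)) / (Σ_{t=1}^n (α_i/α_t) · x_i(α)^{α_i/α_t − 1}). -/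
/-- Implicit differentiation of `∑ t, x_i(α)^{α_i/α_t} = P` with respect to
`α_i`: the partial derivative `∂x_i/∂α_i` is given by the stated formula. -/
theorem stmt15 (n : ℕ) (P : ℝ) (hP : 0 < P) (i : Fin n)
    (Ω : Set (Fin n → ℝ)) (hΩopen : IsOpen Ω) (hΩpos : ∀ α ∈ Ω, ∀ t, 0 < α t)
    (xi : (Fin n → ℝ) → ℝ)
    (hdiff : ∀ α ∈ Ω, DifferentiableAt ℝ xi α)
    (hxi : ∀ α ∈ Ω, 0 < xi α)
    (heq : ∀ α ∈ Ω, ∑ t, (xi α) ^ (α i / α t) = P)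
    (α : Fin n → ℝ) (hα : α ∈ Ω) :
    fderiv ℝ xi α (Pi.single i 1) =
      (-(∑ t ∈ Finset.univ.erase i, (1 / α t) * (xi α) ^ (α i / α t) * Real.log (xi α))) /
        (∑ t, (α i / α t) * (xi α) ^ (α i / α t - 1)) := by
  have hαpos := hΩpos α hα
  have hxpos := hxi α hα
  set x := xi α with hxdef
  set e : Fin n → ℝ := Pi.single i 1 with hedef
  set c : ℝ := fderiv ℝ xi α e with hcdef
  set ℓ : ℝ → (Fin n → ℝ) := fun s => α + s • e with hldef
  have hl0 : ℓ 0 = α := by simp [hldef]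
  have hline : HasDerivAt ℓ e 0 := by
    rw [hldef]; simpa using ((hasDerivAt_id (0:ℝ)).smul_const e).const_add α
  have hxi' : HasFDerivAt xi (fderiv ℝ xi α) α := (hdiff α hα).hasFDerivAt
  have hu : HasDerivAt (fun s => xi (ℓ s)) c 0 := by
    have h := hxi'
    rw [← hl0] at h
    have := h.comp_hasDerivAt 0 hline
    rw [hl0] at this; exact this
  -- derivative of the exponent ℓ s i / ℓ s t
  have hq : ∀ t : Fin n, HasDerivAt (fun s => ℓ s i / ℓ s t)
      ((α t - α i * e t) / (α t) ^ 2) 0 := by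
    intro t
    have hnum : HasDerivAt (fun s => ℓ s i) (e i) 0 := by
      simpa [hldef, Pi.add_apply, Pi.smul_apply] using
        ((hasDerivAt_id (0:ℝ)).mul_const (e i)).const_add (α i)
    have hden : HasDerivAt (fun s => ℓ s t) (e t) 0 := by
      simpa [hldef, Pi.add_apply, Pi.smul_apply] using
        ((hasDerivAt_id (0:ℝ)).mul_const (e t)).const_add (α t)
    have hne : ℓ 0 t ≠ 0 := by rw [hl0]; exact (hαpos t).ne'
    have := hnum.div hden hne
    have hei : e i = 1 := by simp [hedef]
    rw [hl0] at this
    rw [hei, one_mul] at this; exact this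
  -- each summand
  have hterm : ∀ t : Fin n, HasDerivAt (fun s => xi (ℓ s) ^ (ℓ s i / ℓ s t))
      (c * (α i / α t) * x ^ (α i / α t - 1)
        + ((α t - α i * e t) / (α t) ^ 2) * x ^ (α i / α t) * Real.log x) 0 := by
    intro t
    have hpos : 0 < xi (ℓ 0) := by rw [hl0]; exact hxpos
    have := hu.rpow (hq t) hpos
    rw [hl0] at this
    convert this using 1
  -- the sum function
  have hsum : HasDerivAt (fun s => ∑ t, xi (ℓ s) ^ (ℓ s i / ℓ s t))
      (∑ t, (c * (α i / α t) * x ^ (α i / α t - 1)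
        + ((α t - α i * e t) / (α t) ^ 2) * x ^ (α i / α t) * Real.log x)) 0 :=
    HasDerivAt.fun_sum fun t _ => hterm t
  -- the sum is eventually constant P
  have hEq : (fun s => ∑ t, xi (ℓ s) ^ (ℓ s i / ℓ s t)) =ᶠ[nhds (0:ℝ)] fun _ => P := by
    have hcont : Continuous ℓ := by
      apply Continuous.add continuous_const
      exact continuous_id.smul continuous_const
    have hopen : IsOpen (ℓ ⁻¹' Ω) := hΩopen.preimage hcont
    have h0 : (0:ℝ) ∈ ℓ ⁻¹' Ω := by simp [Set.mem_preimage, hl0, hα]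
    filter_upwards [hopen.mem_nhds h0] with s hs
    exact heq (ℓ s) hs
  have hzero : HasDerivAt (fun s => ∑ t, xi (ℓ s) ^ (ℓ s i / ℓ s t)) 0 0 :=
    (hasDerivAt_const (0:ℝ) P).congr_of_eventuallyEq hEq
  have hkey : (∑ t, (c * (α i / α t) * x ^ (α i / α t - 1)
        + ((α t - α i * e t) / (α t) ^ 2) * x ^ (α i / α t) * Real.log x)) = 0 :=
    hsum.unique hzero
  -- split the sum
  rw [Finset.sum_add_distrib] at hkey
  have h1 : (∑ t, c * (α i / α t) * x ^ (α i / α t - 1))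
      = c * ∑ t, (α i / α t) * x ^ (α i / α t - 1) := by
    rw [Finset.mul_sum]; apply Finset.sum_congr rfl; intro t _; ring
  have h2 : (∑ t, ((α t - α i * e t) / (α t) ^ 2) * x ^ (α i / α t) * Real.log x)
      = ∑ t ∈ Finset.univ.erase i, (1 / α t) * x ^ (α i / α t) * Real.log x := by
    rw [← Finset.add_sum_erase _ _ (Finset.mem_univ i)]
    have hzi : ((α i - α i * e i) / (α i) ^ 2) * x ^ (α i / α i) * Real.log x = 0 := by
      simp [hedef]
    rw [hzi, zero_add]
    apply Finset.sum_congr rfl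
    intro t ht
    have htne : t ≠ i := Finset.ne_of_mem_erase ht
    have het : e t = 0 := Pi.single_eq_of_ne htne 1
    rw [het]
    have hne := (hαpos t).ne'
    have : (α t - α i * 0) / (α t) ^ 2 = 1 / α t := by
      rw [mul_zero, sub_zero, pow_two, ← div_div, div_self hne]
    rw [this]
  rw [h1, h2] at hkey
  have hden : 0 < ∑ t, (α i / α t) * x ^ (α i / α t - 1) := by
    apply Finset.sum_pos
    · intro t _
      exact mul_pos (div_pos (hαpos i) (hαpos t)) (Real.rpow_pos_of_pos hxpos _)
    · exact ⟨i, Finset.mem_univ i⟩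
  rw [eq_div_iff hden.ne']
  linarith [hkey]
end

section
/- Let α_1,…,α_n > 0 and x_1,…,x_n > 0 satisfy x_1^{−α_1} = ⋯ = x_n^{−α_n} (equivalently x_j^{α_j} = x_i^{α_i} for all i, j). Then for all indices i ≠ j: ((1/α_i)·x_j^{α_j/α_i}·ln x_j) / (Σ_{t=1}^n (α_j/α_t)·x_j^{α_j/α_t − 1}) = ((α_i/α_j²)·x_i^{α_i/α_j}·ln x_i) / (Σ_{t=1}^n (α_i/α_t)·x_i^{α_i/α_t − 1}). -/
/-- Algebraic identity relating the implicit-differentiation expressions of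
distinct users when `x_1^{-α_1} = ⋯ = x_n^{-α_n}` (equivalently `x_i^{α_i} = x_j^{α_j}`). -/
theorem stmt16 (n : ℕ) (α x : Fin n → ℝ) (hα : ∀ r, 0 < α r) (hx : ∀ r, 0 < x r)
    (heq : ∀ i j, (x i) ^ (α i) = (x j) ^ (α j))
    (i j : Fin n) (hij : i ≠ j) :
    ((1 / α i) * (x j) ^ (α j / α i) * Real.log (x j)) /
        (∑ t, (α j / α t) * (x j) ^ (α j / α t - 1))
      = ((α i / (α j) ^ 2) * (x i) ^ (α i / α j) * Real.log (x i)) /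
        (∑ t, (α i / α t) * (x i) ^ (α i / α t - 1)) := by
  have hai : α i ≠ 0 := (hα i).ne'
  have haj : α j ≠ 0 := (hα j).ne'
  have hxi : (0:ℝ) < x i := hx i
  have hxj : (0:ℝ) < x j := hx j
  have hterm : ∀ k l t : Fin n, x k ^ (α k / α t) = x l ^ (α l / α t) := by
    intro k l t
    calc x k ^ (α k / α t) = (x k ^ α k) ^ (α t)⁻¹ := by
          rw [← Real.rpow_mul (hx k).le, div_eq_mul_inv]
      _ = (x l ^ α l) ^ (α t)⁻¹ := by rw [heq k l]
      _ = x l ^ (α l / α t) := by rw [← Real.rpow_mul (hx l).le, div_eq_mul_inv]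
  have hxi_eq : x j ^ (α j / α i) = x i := by
    rw [hterm j i i, div_self hai, Real.rpow_one]
  have hxj_eq : x i ^ (α i / α j) = x j := by
    rw [hterm i j j, div_self haj, Real.rpow_one]
  have hlog : α i * Real.log (x i) = α j * Real.log (x j) := by
    have h := congrArg Real.log (heq i j)
    rwa [Real.log_rpow hxi, Real.log_rpow hxj] at h
  set S : ℝ := ∑ t, (α i / α t) * x i ^ (α i / α t) with hS_def
  have hS : 0 < S := by
    refine Finset.sum_pos (fun t _ => ?_) ⟨i, Finset.mem_univ i⟩
    exact mul_pos (div_pos (hα i) (hα t)) (Real.rpow_pos_of_pos hxi _)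
  have hsumL : (∑ t, (α j / α t) * x j ^ (α j / α t - 1))
      = (α j / (α i * x j)) * S := by
    rw [hS_def, Finset.mul_sum]
    refine Finset.sum_congr rfl (fun t _ => ?_)
    have hat : α t ≠ 0 := (hα t).ne'
    rw [Real.rpow_sub hxj, Real.rpow_one, hterm j i t]
    field_simp
  have hsumR : (∑ t, (α i / α t) * x i ^ (α i / α t - 1)) = S / x i := by
    rw [hS_def, Finset.sum_div]
    refine Finset.sum_congr rfl (fun t _ => ?_)
    rw [Real.rpow_sub hxi, Real.rpow_one]
    ring
  have hlogj : Real.log (x j) = α i * Real.log (x i) / α j := by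
    rw [eq_div_iff haj]; linarith [hlog]
  rw [hxi_eq, hxj_eq, hsumL, hsumR, hlogj]
  field_simp
end

section
/- Fix P > 0, n ≥ 1, true parameters α̃_1,…,α̃_n > 0 with α̃_r ≠ 1, and an open set Ω ⊆ {α ∈ ℝⁿ : α_t > 0 ∀t}. Let x_1,…,x_n : Ω → (0,∞) be differentiable and satisfy, for all α ∈ Ω and all i: Σ_{t=1}^n x_i(α)^{α_i/α_t} = P and x_i(α)^{−α_i} = x_j(α)^{−α_j} for all j. Define Ψ(α) = Σ_{i=1}^n x_i(α)^{1−α̃_i}/(1−α̃_i). Then for every α ∈ Ω and every j: ∂Ψ/∂α_j (α) = (1/α_j)·ln x_j(α)·Σ_{i≠j} (x_i(α)^{−α̃_i} − x_j(α)^{−α̃_j}) · x_i(α)^{α_i/α_j} / (Σ_{t=1}^n (α_i/α_t)·x_i(α)^{α_i/α_t − 1}). -/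
set_option maxHeartbeats 1000000 in
/-- Formula for the partial derivative `∂Ψ/∂α_j` of the upper-level objective
`Ψ(α) = ∑ i, x_i(α)^{1-α̃_i}/(1-α̃_i)` of the single-link α-fair bilevel problem, where the
lower-level rates satisfy `∑ t, x_i(α)^{α_i/α_t} = P` and `x_i(α)^{-α_i} = x_j(α)^{-α_j}`. -/
theorem stmt17 (n : ℕ) (P : ℝ) (hP : 0 < P)
    (αt : Fin n → ℝ) (hαt : ∀ r, 0 < αt r) (hαt1 : ∀ r, αt r ≠ 1)
    (Ω : Set (Fin n → ℝ)) (hΩopen : IsOpen Ω) (hΩpos : ∀ α ∈ Ω, ∀ t, 0 < α t)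
    (x : Fin n → (Fin n → ℝ) → ℝ)
    (hdiff : ∀ i, ∀ α ∈ Ω, DifferentiableAt ℝ (x i) α)
    (hpos : ∀ i, ∀ α ∈ Ω, 0 < x i α)
    (hsum : ∀ i, ∀ α ∈ Ω, ∑ t, (x i α) ^ (α i / α t) = P)
    (hrel : ∀ α ∈ Ω, ∀ i j, (x i α) ^ (-(α i)) = (x j α) ^ (-(α j)))
    (α : Fin n → ℝ) (hα : α ∈ Ω) (j : Fin n) :
    fderiv ℝ (fun a => ∑ i, (x i a) ^ (1 - αt i) / (1 - αt i)) α (Pi.single j 1) =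
      (1 / α j) * Real.log (x j α) *
        ∑ i ∈ Finset.univ.erase j,
          ((x i α) ^ (-(αt i)) - (x j α) ^ (-(αt j))) * (x i α) ^ (α i / α j) /
            (∑ t, (α i / α t) * (x i α) ^ (α i / α t - 1)) := by
  set X : Fin n → ℝ := fun i => x i α with hX
  have hxpos : ∀ i, 0 < X i := fun i => hpos i α hα
  have hai : ∀ i, α i ≠ 0 := fun i => (hΩpos α hα i).ne'
  have hXa : ∀ i t, X i ^ (α i) = X t ^ (α t) := by
    intro i t
    have h := hrel α hα i t
    rw [Real.rpow_neg (hxpos i).le, Real.rpow_neg (hxpos t).le] at h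
    exact inv_injective h
  have hpow : ∀ i t, X i ^ (α i / α t) = X t := by
    intro i t
    rw [div_eq_mul_inv, Real.rpow_mul (hxpos i).le, hXa i t,
      Real.rpow_rpow_inv (hxpos t).le (hai t)]
  have hpow1 : ∀ i t, X i ^ (α i / α t - 1) = X t / X i := by
    intro i t
    rw [Real.rpow_sub (hxpos i), Real.rpow_one, hpow]
  have hlog : ∀ i, α i * Real.log (X i) = α j * Real.log (X j) := by
    intro i
    have := congrArg Real.log (hXa i j)
    rwa [Real.log_rpow (hxpos i), Real.log_rpow (hxpos j)] at this
  -- derivative setup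
  set F : Fin n → (Fin n → ℝ) →L[ℝ] ℝ := fun i => fderiv ℝ (x i) α with hF
  have hFd : ∀ i, HasFDerivAt (x i) (F i) α := fun i => (hdiff i α hα).hasFDerivAt
  set d : Fin n → ℝ := fun i => F i (Pi.single j 1) with hd
  set pr : Fin n → ((Fin n → ℝ) →L[ℝ] ℝ) :=
    fun k => ContinuousLinearMap.proj k with hpr
  have hproj : ∀ k : Fin n, HasFDerivAt (fun a : Fin n → ℝ => a k) (pr k) α :=
    fun k => (pr k).hasFDerivAt
  have hinv : ∀ t : Fin n, HasFDerivAt (fun a : Fin n → ℝ => (a t)⁻¹)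
      ((-((α t) ^ 2)⁻¹) • pr t) α := fun t =>
    (hasDerivAt_inv (hai t)).comp_hasFDerivAt α (hproj t)
  have hq : ∀ i t : Fin n, HasFDerivAt (fun a : Fin n → ℝ => a i / a t)
      ((α i) • ((-((α t) ^ 2)⁻¹) • pr t)
        + (α t)⁻¹ • pr i) α := by
    intro i t
    simpa [div_eq_mul_inv] using (hproj i).fun_mul (hinv t)
  have hterm : ∀ i t : Fin n, HasFDerivAt (fun a => x i a ^ (a i / a t))
      ((α i / α t * X i ^ (α i / α t - 1)) • F i
        + (X i ^ (α i / α t) * Real.log (X i)) •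
          ((α i) • ((-((α t) ^ 2)⁻¹) • pr t)
            + (α t)⁻¹ • pr i)) α := fun i t =>
    (hFd i).rpow (hq i t) (hxpos i)
  have hgsum : ∀ i, HasFDerivAt (fun a => ∑ t, x i a ^ (a i / a t)) (∑ t,
      ((α i / α t * X i ^ (α i / α t - 1)) • F i
        + (X i ^ (α i / α t) * Real.log (X i)) •
          ((α i) • ((-((α t) ^ 2)⁻¹) • pr t)
            + (α t)⁻¹ • pr i))) α := fun i =>
    HasFDerivAt.fun_sum (fun t _ => hterm i t)
  have hzero : ∀ i, HasFDerivAt (fun a => ∑ t, x i a ^ (a i / a t))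
      (0 : (Fin n → ℝ) →L[ℝ] ℝ) α := by
    intro i
    refine (hasFDerivAt_const P α).congr_of_eventuallyEq ?_
    exact Filter.eventuallyEq_of_mem (hΩopen.mem_nhds hα) (fun a ha => hsum i a ha)
  set T : ℝ := ∑ t, X t / α t with hT
  have hTpos : 0 < T := Finset.sum_pos (fun t _ => div_pos (hxpos t) (hΩpos α hα t))
    ⟨j, Finset.mem_univ j⟩
  have hE : ∀ i : Fin n, (d i * (α i / X i) + Real.log (X i) * (if i = j then 1 else 0)) * T
      - Real.log (X i) * α i * (X j / (α j) ^ 2) = 0 := by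
    intro i
    have h := ((hgsum i).unique (hzero i))
    have h2 := congrArg (fun (L : (Fin n → ℝ) →L[ℝ] ℝ) => L (Pi.single j 1)) h
    simp only [ContinuousLinearMap.sum_apply, ContinuousLinearMap.add_apply,
      ContinuousLinearMap.smul_apply, ContinuousLinearMap.zero_apply, smul_eq_mul,
      hpr, ContinuousLinearMap.proj_apply, Pi.single_apply] at h2
    have hrw : ∀ t : Fin n, α i / α t * X i ^ (α i / α t - 1) * (F i) (Pi.single j 1) +
        X i ^ (α i / α t) * Real.log (X i) *
          (α i * (-(α t ^ 2)⁻¹ * if t = j then 1 else 0) + (α t)⁻¹ * if i = j then 1 else 0)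
        = (d i * (α i / X i) + Real.log (X i) * (if i = j then 1 else 0)) * (X t / α t)
          + (-(Real.log (X i) * α i * (X t / (α t) ^ 2))) * (if t = j then 1 else 0) := by
      intro t
      have hde : (F i) (Pi.single j 1) = d i := rfl
      have h1 : α t ≠ 0 := hai t
      have h2 : X i ≠ 0 := (hxpos i).ne'
      rw [hde, hpow i t, hpow1 i t]
      generalize (if t = j then (1:ℝ) else 0) = c1
      generalize (if i = j then (1:ℝ) else 0) = c2
      field_simp
      ring
    rw [Finset.sum_congr rfl (fun t _ => hrw t), Finset.sum_add_distrib, ← Finset.mul_sum,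
      ← hT] at h2
    simp only [mul_ite, mul_one, mul_zero, Finset.sum_ite_eq', Finset.mem_univ,
      if_true] at h2
    split_ifs at h2 ⊢ <;> linarith
  have hdij : ∀ i : Fin n, d i * (α i * α j * T) = Real.log (X j) * X i * X j
      - (if i = j then Real.log (X j) * X j * α j * T else 0) := by
    intro i
    have hEi := hE i
    have hli := hlog i
    have hXne : X i ≠ 0 := (hxpos i).ne'
    have hXje : X j ≠ 0 := (hxpos j).ne'
    have hTne : T ≠ 0 := hTpos.ne'
    have haj : α j ≠ 0 := hai j
    have haii : α i ≠ 0 := hai i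
    rcases eq_or_ne i j with rfl | hij
    · rw [if_pos rfl] at hEi ⊢
      field_simp at hEi
      refine mul_left_cancel₀ haii ?_
      linear_combination α i * hEi
    · rw [if_neg hij] at hEi ⊢
      field_simp at hEi
      refine mul_left_cancel₀ haj ?_
      linear_combination hEi + X i * X j * hli
  have hdi : ∀ i : Fin n, d i = (Real.log (X j) * X i * X j
      - (if i = j then Real.log (X j) * X j * α j * T else 0)) / (α i * α j * T) := by
    intro i
    rw [eq_div_iff (mul_ne_zero (mul_ne_zero (hai i) (hai j)) hTpos.ne')]
    exact hdij i
  simp only [show ∀ i : Fin n, x i α = X i from fun i => rfl]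
  -- LHS derivative
  have hΨ : HasFDerivAt (fun a => ∑ i, x i a ^ (1 - αt i) / (1 - αt i))
      (∑ i, (X i ^ (-(αt i))) • F i) α := by
    refine HasFDerivAt.fun_sum (fun i _ => ?_)
    have h := ((hFd i).rpow_const (p := 1 - αt i) (Or.inl (hxpos i).ne')).mul_const (1 - αt i)⁻¹
    have h1 : (1:ℝ) - αt i ≠ 0 := sub_ne_zero.mpr (Ne.symm (hαt1 i))
    have hco : (1 - αt i)⁻¹ • ((1 - αt i) * X i ^ (1 - αt i - 1)) • F i
        = (X i ^ (-(αt i))) • F i := by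
      rw [smul_smul, show (1 - αt i - 1 : ℝ) = -(αt i) by ring, ← mul_assoc,
        inv_mul_cancel₀ h1, one_mul]
    rw [← hco]
    simpa [div_eq_mul_inv, mul_comm] using h
  have hLHS : fderiv ℝ (fun a => ∑ i, x i a ^ (1 - αt i) / (1 - αt i)) α (Pi.single j 1)
      = ∑ i, X i ^ (-(αt i)) * d i := by
    rw [hΨ.fderiv]
    simp only [ContinuousLinearMap.sum_apply, ContinuousLinearMap.smul_apply, smul_eq_mul]
    rfl
  rw [hLHS]
  -- rewrite RHS denominators
  have hden : ∀ i : Fin n, (∑ t, α i / α t * X i ^ (α i / α t - 1)) = α i * T / X i := by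
    intro i
    have hXne : X i ≠ 0 := (hxpos i).ne'
    calc ∑ t, α i / α t * X i ^ (α i / α t - 1) = ∑ t, (α i / X i) * (X t / α t) := by
          refine Finset.sum_congr rfl (fun t _ => ?_)
          rw [hpow1 i t, div_mul_div_comm, div_mul_div_comm, mul_comm (α t) (X i)]
      _ = α i * T / X i := by rw [← Finset.mul_sum, ← hT]; ring
  have hRHS : (1 / α j * Real.log (X j) *
        ∑ i ∈ Finset.univ.erase j, (X i ^ (-(αt i)) - X j ^ (-(αt j))) * X i ^ (α i / α j) /
          (∑ t, α i / α t * X i ^ (α i / α t - 1)))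
      = ∑ i ∈ Finset.univ.erase j, (1 / α j * Real.log (X j)) *
          ((X i ^ (-(αt i)) - X j ^ (-(αt j))) * X j / (α i * T / X i)) := by
    rw [Finset.mul_sum]
    exact Finset.sum_congr rfl (fun i _ => by rw [hpow i j, hden i])
  rw [hRHS]
  rw [← Finset.sum_erase_add _ _ (Finset.mem_univ j)]
  have key : ∀ i ∈ Finset.univ.erase j,
      X i ^ (-(αt i)) * d i
        = (1 / α j * Real.log (X j)) * ((X i ^ (-(αt i)) - X j ^ (-(αt j))) * X j / (α i * T / X i))
          + (Real.log (X j) * X j ^ (-(αt j)) * X j / (α j * T)) * (X i / α i) := by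
    intro i hi
    have hij : i ≠ j := Finset.ne_of_mem_erase hi
    have hXne : X i ≠ 0 := (hxpos i).ne'
    have hTne : T ≠ 0 := hTpos.ne'
    have haj : α j ≠ 0 := hai j
    have haii : α i ≠ 0 := hai i
    rw [hdi i, if_neg hij]
    clear hterm hgsum hzero hq hinv hproj hFd hE hdij hΨ hLHS hrel hsum hdiff hpos hpow hpow1 hXa hlog hden
    generalize X i ^ (-(αt i)) = A
    generalize X j ^ (-(αt j)) = B
    generalize Real.log (X j) = L
    field_simp
    ring
  rw [Finset.sum_congr rfl key, Finset.sum_add_distrib]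
  have hTsplit : ∑ i ∈ Finset.univ.erase j, X i / α i = T - X j / α j := by
    have h := Finset.sum_erase_add Finset.univ (fun t => X t / α t) (Finset.mem_univ j)
    rw [← hT] at h
    linarith
  have hCsum : ∑ i ∈ Finset.univ.erase j,
      (Real.log (X j) * X j ^ (-(αt j)) * X j / (α j * T)) * (X i / α i)
      = (Real.log (X j) * X j ^ (-(αt j)) * X j / (α j * T)) * (T - X j / α j) := by
    rw [← Finset.mul_sum, hTsplit]
  rw [hCsum]
  have hfj : X j ^ (-(αt j)) * d j
      + (Real.log (X j) * X j ^ (-(αt j)) * X j / (α j * T)) * (T - X j / α j) = 0 := by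
    have hXje : X j ≠ 0 := (hxpos j).ne'
    have hTne : T ≠ 0 := hTpos.ne'
    have haj : α j ≠ 0 := hai j
    rw [hdi j, if_pos rfl]
    clear hterm hgsum hzero hq hinv hproj hFd hE hdij hΨ hLHS hrel hsum hdiff hpos hpow hpow1 hXa hlog hden key
    generalize X j ^ (-(αt j)) = B
    generalize Real.log (X j) = L
    field_simp
    ring
  linarith [hfj]
end

section
/- Let Ũ : ℝ → ℝ be differentiable with L_u-Lipschitz continuous derivative, let δ > 0, x ∈ ℝ, and let u be a standard Gaussian random variable. Define the two-point gradient estimator ĝ_two(x;u) = ((Ũ(x + δu) − Ũ(x))/δ)·u. Then |E_u[ĝ_two(x;u)] − Ũ′(x)| ≤ 4·L_u·δ. -/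
open ProbabilityTheory
open MeasureTheory Real Set
open scoped NNReal ENNReal

lemma gauss_integral_eq (g : ℝ → ℝ) :
    ∫ u, g u ∂(gaussianReal 0 1) = ∫ u, gaussianPDFReal 0 1 u * g u := by
  rw [gaussianReal_of_var_ne_zero 0 one_ne_zero, gaussianPDF_def]
  have hmeas : Measurable (fun u => (gaussianPDFReal 0 1 u).toNNReal) :=
    (measurable_gaussianPDFReal 0 1).real_toNNReal
  have hd : (fun x => ENNReal.ofReal (gaussianPDFReal 0 1 x))
      = fun x => (((gaussianPDFReal 0 1 x).toNNReal : ℝ≥0) : ℝ≥0∞) := rfl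
  rw [hd, integral_withDensity_eq_integral_smul hmeas]
  refine integral_congr_ae (Filter.Eventually.of_forall fun u => ?_)
  simp [NNReal.smul_def, Real.coe_toNNReal _ (gaussianPDFReal_nonneg 0 1 u)]

lemma gauss_integrable (g : ℝ → ℝ)
    (h : Integrable (fun u => g u * gaussianPDFReal 0 1 u)) :
    Integrable g (gaussianReal 0 1) := by
  rw [gaussianReal_of_var_ne_zero 0 one_ne_zero, gaussianPDF_def]
  rw [integrable_withDensity_iff (measurable_gaussianPDFReal 0 1).ennreal_ofReal
    (Filter.Eventually.of_forall fun u => ENNReal.ofReal_lt_top)]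
  refine h.congr (Filter.Eventually.of_forall fun u => ?_)
  simp [ENNReal.toReal_ofReal (gaussianPDFReal_nonneg 0 1 u)]

lemma pdf_eq (u : ℝ) :
    gaussianPDFReal 0 1 u = (√(2*π))⁻¹ * rexp (-(1/2) * u^2) := by
  simp only [gaussianPDFReal, NNReal.coe_one, mul_one, sub_zero]
  ring_nf

lemma sqrt_two_pi' : √(2*π) = √2 * √π := Real.sqrt_mul (by norm_num) π


lemma habs_pow (n : ℕ) (hn : Even n) :
    ∫ u : ℝ, u ^ n * rexp (-(1/2) * u^2)
      = 2 * ∫ x in Ioi (0:ℝ), x ^ n * rexp (-(1/2) * x^2) := by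
  rw [← integral_comp_abs (f := fun t : ℝ => t ^ n * rexp (-(1/2) * t^2))]
  refine integral_congr_ae (.of_forall fun u => ?_)
  simp [sq_abs, hn.pow_abs]

lemma gauss_sq_vol : ∫ u : ℝ, gaussianPDFReal 0 1 u * u ^ 2 = 1 := by
  have h1 : (fun u : ℝ => gaussianPDFReal 0 1 u * u ^ 2)
      = fun u : ℝ => (√(2*π))⁻¹ * (u ^ 2 * rexp (-(1/2) * u^2)) := by
    funext u; rw [pdf_eq]; ring
  rw [h1, integral_const_mul, habs_pow 2 (by decide)]
  have h2 : ∫ x in Ioi (0:ℝ), x ^ 2 * rexp (-(1/2) * x^2)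
      = ∫ x in Ioi (0:ℝ), x ^ (2:ℝ) * rexp (-(1/2) * x ^ (2:ℝ)) := by
    refine setIntegral_congr_fun measurableSet_Ioi (fun t _ => ?_)
    norm_num [Real.rpow_natCast]
  rw [h2, integral_rpow_mul_exp_neg_mul_rpow two_pos (by norm_num) (by norm_num)]
  have hG : Real.Gamma (((2:ℝ)+1)/2) = √π / 2 := by
    rw [show ((2:ℝ)+1)/2 = 1/2 + 1 by norm_num, Real.Gamma_add_one (by norm_num),
      Real.Gamma_one_half_eq]
    ring
  have hb : ((1:ℝ)/2) ^ (-((2:ℝ)+1)/2) = 2 * √2 := by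
    rw [show (-((2:ℝ)+1)/2) = -(3/2) by norm_num, one_div, Real.inv_rpow (by norm_num),
      Real.rpow_neg (by norm_num), inv_inv, show (3/2:ℝ) = 1 + 1/2 by norm_num,
      Real.rpow_add two_pos, Real.rpow_one, ← Real.sqrt_eq_rpow]
  rw [hG, hb, sqrt_two_pi']
  have h2p : (0:ℝ) < √2 := Real.sqrt_pos.mpr (by norm_num)
  have hpp : (0:ℝ) < √π := Real.sqrt_pos.mpr Real.pi_pos
  have hs2 : √2 * √2 = 2 := Real.mul_self_sqrt (by norm_num)
  field_simp

lemma gauss_pow4_vol : ∫ u : ℝ, gaussianPDFReal 0 1 u * u ^ 4 = 3 := by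
  have h1 : (fun u : ℝ => gaussianPDFReal 0 1 u * u ^ 4)
      = fun u : ℝ => (√(2*π))⁻¹ * (u ^ 4 * rexp (-(1/2) * u^2)) := by
    funext u; rw [pdf_eq]; ring
  rw [h1, integral_const_mul, habs_pow 4 (by decide)]
  have h2 : ∫ x in Ioi (0:ℝ), x ^ 4 * rexp (-(1/2) * x^2)
      = ∫ x in Ioi (0:ℝ), x ^ (4:ℝ) * rexp (-(1/2) * x ^ (2:ℝ)) := by
    refine setIntegral_congr_fun measurableSet_Ioi (fun t _ => ?_)
    rw [show (4:ℝ) = ((4:ℕ):ℝ) by norm_num, Real.rpow_natCast]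
    norm_num [Real.rpow_natCast]
  rw [h2, integral_rpow_mul_exp_neg_mul_rpow two_pos (by norm_num) (by norm_num)]
  have hG : Real.Gamma (((4:ℝ)+1)/2) = 3/4 * √π := by
    rw [show ((4:ℝ)+1)/2 = 3/2 + 1 by norm_num, Real.Gamma_add_one (by norm_num),
      show (3/2:ℝ) = 1/2 + 1 by norm_num, Real.Gamma_add_one (by norm_num),
      Real.Gamma_one_half_eq]
    ring
  have hb : ((1:ℝ)/2) ^ (-((4:ℝ)+1)/2) = 4 * √2 := by
    rw [show (-((4:ℝ)+1)/2) = -(5/2) by norm_num, one_div, Real.inv_rpow (by norm_num),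
      Real.rpow_neg (by norm_num), inv_inv, show (5/2:ℝ) = 2 + 1/2 by norm_num,
      Real.rpow_add two_pos, ← Real.sqrt_eq_rpow,
      show ((2:ℝ) ^ (2:ℝ)) = 4 by norm_num [Real.rpow_natCast]]
  rw [hG, hb, sqrt_two_pi']
  have h2p : (0:ℝ) < √2 := Real.sqrt_pos.mpr (by norm_num)
  have hpp : (0:ℝ) < √π := Real.sqrt_pos.mpr Real.pi_pos
  have hs2 : √2 * √2 = 2 := Real.mul_self_sqrt (by norm_num)
  field_simp

lemma int_vol_pow (n : ℕ) :
    Integrable (fun u : ℝ => u ^ n * gaussianPDFReal 0 1 u) := by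
  have h := integrable_rpow_mul_exp_neg_mul_sq (b := 1/2) (by norm_num) (s := (n:ℝ))
    (lt_of_lt_of_le neg_one_lt_zero (Nat.cast_nonneg n))
  have h2 : Integrable (fun u : ℝ => (√(2*π))⁻¹ * (u ^ ((n:ℕ):ℝ) * rexp (-(1/2) * u ^ 2))) :=
    h.const_mul _
  refine h2.congr (Filter.Eventually.of_forall fun u => ?_)
  simp only [Real.rpow_natCast]
  rw [pdf_eq]
  ring


/-- Bias bound for the two-point zeroth-order gradient estimator with Gaussian
smoothing: if `Ũ` is differentiable with `L_u`-Lipschitz derivative, then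
`|E_u[((Ũ(x+δu) − Ũ(x))/δ)·u] − Ũ'(x)| ≤ 4 L_u δ` for `u ~ N(0,1)`. -/
theorem stmt19 (Ut : ℝ → ℝ) (Lu : ℝ) (hLu : 0 ≤ Lu)
    (hdiff : Differentiable ℝ Ut)
    (hlip : ∀ x y : ℝ, |deriv Ut x - deriv Ut y| ≤ Lu * |x - y|)
    (δ : ℝ) (hδ : 0 < δ) (x : ℝ) :
    |(∫ u, ((Ut (x + δ * u) - Ut x) / δ) * u ∂(gaussianReal 0 1)) - deriv Ut x|
      ≤ 4 * Lu * δ := by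
  set d := deriv Ut x with hd
  have hint2 : Integrable (fun u : ℝ => u ^ 2) (gaussianReal 0 1) :=
    gauss_integrable _ (int_vol_pow 2)
  have hint4 : Integrable (fun u : ℝ => u ^ 4) (gaussianReal 0 1) :=
    gauss_integrable _ (int_vol_pow 4)
  have hmom2 : ∫ u, u ^ 2 ∂(gaussianReal 0 1) = 1 := by
    rw [gauss_integral_eq]; exact gauss_sq_vol
  have hmom4 : ∫ u, u ^ 4 ∂(gaussianReal 0 1) = 3 := by
    rw [gauss_integral_eq]; exact gauss_pow4_vol
  have taylor : ∀ s : ℝ, |Ut (x + s) - Ut x - s * d| ≤ Lu * s ^ 2 := by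
    intro s
    have hderiv : ∀ t ∈ Set.uIcc (0:ℝ) s, HasDerivWithinAt (fun t => Ut (x + t) - t * d)
        (deriv Ut (x + t) - d) (Set.uIcc (0:ℝ) s) t := by
      intro t _
      have h1 : HasDerivAt (fun t : ℝ => Ut (x + t)) (deriv Ut (x + t)) t := by
        simpa [Function.comp_def] using ((hdiff (x + t)).hasDerivAt.comp t ((hasDerivAt_id t).const_add x))
      have h2 : HasDerivAt (fun t : ℝ => t * d) d t := by
        simpa using (hasDerivAt_id t).mul_const d
      exact (h1.sub h2).hasDerivWithinAt
    have hbound : ∀ t ∈ Set.uIcc (0:ℝ) s, ‖deriv Ut (x + t) - d‖ ≤ Lu * |s| := by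
      intro t ht
      have hts : |t| ≤ |s| := by
        rcases Set.mem_uIcc.mp ht with h | h
        · exact abs_le.mpr ⟨by linarith [neg_abs_le s, abs_nonneg s], by linarith [le_abs_self s]⟩
        · exact abs_le.mpr ⟨by linarith [neg_abs_le s], by linarith [le_abs_self s, abs_nonneg s]⟩
      calc ‖deriv Ut (x + t) - d‖ = |deriv Ut (x + t) - deriv Ut x| := by
            rw [Real.norm_eq_abs, hd]
        _ ≤ Lu * |x + t - x| := hlip _ _
        _ = Lu * |t| := by rw [add_sub_cancel_left]
        _ ≤ Lu * |s| := mul_le_mul_of_nonneg_left hts hLu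
    have hmvt := Convex.norm_image_sub_le_of_norm_hasDerivWithin_le hderiv hbound
      (convex_uIcc _ _) (Set.left_mem_uIcc) (Set.right_mem_uIcc)
    calc |Ut (x + s) - Ut x - s * d|
        = ‖(Ut (x + s) - s * d) - (Ut (x + 0) - 0 * d)‖ := by
          rw [Real.norm_eq_abs, add_zero, zero_mul, sub_zero]; congr 1; ring
      _ ≤ Lu * |s| * ‖s - 0‖ := hmvt
      _ = Lu * s ^ 2 := by rw [sub_zero, Real.norm_eq_abs, ← sq_abs]; ring
  set e : ℝ → ℝ := fun u => ((Ut (x + δ * u) - Ut x) / δ) * u - u ^ 2 * d with he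
  have key : ∀ u : ℝ, |e u| ≤ Lu * δ * (u ^ 2 + u ^ 4) := by
    intro u
    have hT := taylor (δ * u)
    have heq : e u = (Ut (x + δ * u) - Ut x - (δ * u) * d) * u / δ := by
      rw [he]; field_simp
    rw [heq, abs_div, abs_of_pos hδ, abs_mul, div_le_iff₀ hδ]
    have hcube : |u| ^ 3 ≤ u ^ 2 + u ^ 4 := by
      nlinarith [abs_nonneg u, sq_abs u, sq_nonneg (|u| - 1), sq_nonneg u]
    have h3 : u ^ 2 * |u| = |u| ^ 3 := by rw [← sq_abs]; ring
    calc |Ut (x + δ * u) - Ut x - (δ * u) * d| * |u| ≤ (Lu * (δ * u) ^ 2) * |u| :=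
          mul_le_mul_of_nonneg_right hT (abs_nonneg u)
      _ = Lu * δ ^ 2 * (u ^ 2 * |u|) := by ring
      _ = Lu * δ ^ 2 * |u| ^ 3 := by rw [h3]
      _ ≤ Lu * δ ^ 2 * (u ^ 2 + u ^ 4) := mul_le_mul_of_nonneg_left hcube (by positivity)
      _ = Lu * δ * (u ^ 2 + u ^ 4) * δ := by ring
  have e_cont : Continuous e :=
    ((((hdiff.continuous.comp (continuous_const.add (continuous_const.mul
      continuous_id))).sub continuous_const).div_const δ).mul continuous_id).sub
      ((continuous_pow 2).mul continuous_const)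
  have hbound_int : Integrable (fun u : ℝ => Lu * δ * (u ^ 2 + u ^ 4)) (gaussianReal 0 1) :=
    (hint2.add hint4).const_mul _
  have he_int : Integrable e (gaussianReal 0 1) :=
    hbound_int.mono' e_cont.aestronglyMeasurable
      (Filter.Eventually.of_forall fun u => by rw [Real.norm_eq_abs]; exact key u)
  have hfull : (fun u : ℝ => ((Ut (x + δ * u) - Ut x) / δ) * u)
      = fun u => u ^ 2 * d + e u := by
    funext u; rw [he]; ring
  have hsplit : ∫ u, ((Ut (x + δ * u) - Ut x) / δ) * u ∂(gaussianReal 0 1)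
      = d + ∫ u, e u ∂(gaussianReal 0 1) := by
    rw [hfull, integral_add (hint2.mul_const d) he_int, integral_mul_const, hmom2, one_mul]
  rw [hsplit, add_sub_cancel_left]
  calc |∫ u, e u ∂(gaussianReal 0 1)| ≤ ∫ u, |e u| ∂(gaussianReal 0 1) := by
        simpa [Real.norm_eq_abs] using
          norm_integral_le_integral_norm (μ := gaussianReal 0 1) e
    _ ≤ ∫ u, Lu * δ * (u ^ 2 + u ^ 4) ∂(gaussianReal 0 1) :=
        integral_mono he_int.abs hbound_int key
    _ = 4 * Lu * δ := by
        rw [integral_const_mul, integral_add hint2 hint4, hmom2, hmom4]; ring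
end
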